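/- Let H be a real Hilbert space, F ∈ Γ₀(H), G ∈ Γ₀(G) for a real Hilbert space G, and ℓ ∈ Γ₀(G) δ-strongly convex. Then ∂(G □ ℓ) = ((∂G)⁻¹ + (∂ℓ)⁻¹)⁻¹, where G □ ℓ denotes the infimal convolution (G □ ℓ)(y) = inf_z (G(z) + ℓ(y − z)). -/

import Mathlib

open scoped RealInnerProductSpace Pointwise

/-- Convex subdifferential of an extended-real-valued function. -/
def subdiff {G : Type*} [NormedAddCommGroup G] [InnerProductSpace ℝ G]
    (f : G → EReal) (x : G) : Set G :=
  {u | ∀ y : G, f x + ((⟪u, y - x⟫ : ℝ) : EReal) ≤ f y}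

/-- Inverse of a set-valued operator. -/
def svInv {G : Type*} (A : G → Set G) : G → Set G := fun u => {x | u ∈ A x}

/-- A proper lsc convex EReal function has a continuous affine minorant. -/
lemma affine_minorant {G : Type*} [NormedAddCommGroup G] [NormedSpace ℝ G]
    (f : G → EReal) (hproper : (∃ x, f x ≠ ⊤) ∧ ∀ x, f x ≠ ⊥)
    (hlsc : LowerSemicontinuous f)
    (hconvex : ∀ (x y : G) (a b : ℝ), 0 ≤ a → 0 ≤ b → a + b = 1 →
      f (a • x + b • y) ≤ (a : EReal) * f x + (b : EReal) * f y) :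
    ∃ (g : G →L[ℝ] ℝ) (c : ℝ), ∀ z, ((g z + c : ℝ) : EReal) ≤ f z := by
  obtain ⟨⟨x₀, hx₀⟩, hbot⟩ := hproper
  set S : Set (G × ℝ) := {p | f p.1 ≤ (p.2 : EReal)} with hS
  have hSconv : Convex ℝ S := by
    rintro ⟨z₁, t₁⟩ h₁ ⟨z₂, t₂⟩ h₂ a b ha hb hab
    simp only [hS, Set.mem_setOf_eq] at h₁ h₂ ⊢
    calc f (a • z₁ + b • z₂) ≤ (a : EReal) * f z₁ + (b : EReal) * f z₂ :=
          hconvex z₁ z₂ a b ha hb hab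
      _ ≤ (a : EReal) * (t₁ : EReal) + (b : EReal) * (t₂ : EReal) :=
          add_le_add (mul_le_mul_of_nonneg_left h₁ (by exact_mod_cast ha))
            (mul_le_mul_of_nonneg_left h₂ (by exact_mod_cast hb))
      _ = ((a * t₁ + b * t₂ : ℝ) : EReal) := by push_cast; ring
  have hSclosed : IsClosed S := by
    have h1 : IsClosed {p : G × EReal | f p.1 ≤ p.2} := hlsc.isClosed_epigraph
    have : S = (fun p : G × ℝ => (p.1, (p.2 : EReal))) ⁻¹' {p : G × EReal | f p.1 ≤ p.2} := rfl
    rw [this]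
    exact h1.preimage (continuous_fst.prodMk (continuous_coe_real_ereal.comp continuous_snd))
  set r : ℝ := (f x₀).toReal with hr
  have hfx₀ : f x₀ = (r : EReal) := (EReal.coe_toReal hx₀ (hbot x₀)).symm
  have hpnot : (x₀, r - 1) ∉ S := by
    simp only [hS, Set.mem_setOf_eq, hfx₀, EReal.coe_le_coe_iff]
    linarith
  obtain ⟨φ, u, hφp, hφS⟩ := geometric_hahn_banach_point_closed hSconv hSclosed hpnot
  set g : G →L[ℝ] ℝ := φ.comp (ContinuousLinearMap.inl ℝ G ℝ) with hg
  set s : ℝ := φ (0, 1) with hs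
  have hφ : ∀ z : G, ∀ t : ℝ, φ (z, t) = g z + t * s := by
    intro z t
    have : (z, t) = (z, (0:ℝ)) + t • ((0:G), (1:ℝ)) := by
      simp [Prod.ext_iff]
    rw [this, map_add, map_smul]
    simp only [hg, hs, ContinuousLinearMap.coe_comp', Function.comp_apply,
      ContinuousLinearMap.inl_apply, smul_eq_mul]
  have hmemS : ∀ t : ℝ, r ≤ t → (x₀, t) ∈ S := by
    intro t ht
    simp only [hS, Set.mem_setOf_eq, hfx₀]
    exact_mod_cast ht
  have hspos : 0 < s := by
    by_contra hsle
    push_neg at hsle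
    -- for all n, u < φ (x₀, r + n) = g x₀ + (r+n) s; but s ≤ 0 so this is ≤ g x₀ + r*s... 
    -- also φ (x₀, r-1) = g x₀ + (r-1) s < u
    have h1 := hφS _ (hmemS r le_rfl)
    have h2 := hφp
    rw [hφ] at h1 h2
    -- g x₀ + (r-1) s < u < g x₀ + r s  ⇒ -s < 0 ⇒ s > 0, contradiction with s ≤ 0
    nlinarith
  refine ⟨(-s⁻¹) • g, u / s, fun z => ?_⟩
  rcases eq_or_ne (f z) ⊤ with h | h
  · simp [h]
  · have hfz : f z = ((f z).toReal : EReal) := (EReal.coe_toReal h (hbot z)).symm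
    have hmem : (z, (f z).toReal) ∈ S := hfz.le
    have := hφS _ hmem
    rw [hφ] at this
    rw [hfz, EReal.coe_le_coe_iff]
    simp only [ContinuousLinearMap.smul_apply, smul_eq_mul]
    have hs' : s ≠ 0 := ne_of_gt hspos
    have key : (u - g z) / s ≤ (f z).toReal := by
      rw [div_le_iff₀ hspos]; nlinarith
    have : -s⁻¹ * g z + u / s = (u - g z) / s := by field_simp; ring
    linarith [this ▸ key]

/-- A strongly convex proper lsc function attains its minimum. -/
lemma strongly_convex_argmin {G : Type*} [NormedAddCommGroup G] [NormedSpace ℝ G]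
    [CompleteSpace G]
    (h : G → EReal) (δ : ℝ) (hδ : 0 < δ)
    (hproper : (∃ x, h x ≠ ⊤) ∧ ∀ x, h x ≠ ⊥)
    (hlsc : LowerSemicontinuous h)
    (hstrong : ∀ (x y : G) (a b : ℝ), 0 ≤ a → 0 ≤ b → a + b = 1 →
      h (a • x + b • y) + ((δ / 2 * a * b * ‖x - y‖ ^ 2 : ℝ) : EReal)
        ≤ (a : EReal) * h x + (b : EReal) * h y) :
    ∃ xb, ∀ z, h xb ≤ h z := by
  obtain ⟨⟨z₀, hz₀⟩, hbot⟩ := hproper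
  have hconvex : ∀ (x y : G) (a b : ℝ), 0 ≤ a → 0 ≤ b → a + b = 1 →
      h (a • x + b • y) ≤ (a : EReal) * h x + (b : EReal) * h y := by
    intro x y a b ha hb hab
    refine le_trans ?_ (hstrong x y a b ha hb hab)
    have : (0:ℝ) ≤ δ / 2 * a * b * ‖x - y‖ ^ 2 := by positivity
    calc h (a • x + b • y) = h (a • x + b • y) + (0 : EReal) := by rw [add_zero]
      _ ≤ _ := by
        gcongr
        exact_mod_cast this
  obtain ⟨g, c, hgc⟩ := affine_minorant h ⟨⟨z₀, hz₀⟩, hbot⟩ hlsc hconvex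
  set r₀ : ℝ := (h z₀).toReal with hr₀
  have hhz₀ : h z₀ = (r₀ : EReal) := (EReal.coe_toReal hz₀ (hbot z₀)).symm
  -- midpoint inequality
  have hmid : ∀ x y : G, h ((1/2 : ℝ) • x + (1/2 : ℝ) • y)
      + ((δ / 8 * ‖x - y‖ ^ 2 : ℝ) : EReal) ≤ ((1/2 : ℝ) : EReal) * h x + ((1/2 : ℝ) : EReal) * h y := by
    intro x y
    have := hstrong x y (1/2) (1/2) (by norm_num) (by norm_num) (by norm_num)
    convert this using 3
    push_cast
    ring
  -- global lower bound
  set B : ℝ := g z₀ + 2 * c - r₀ - ‖g‖ * ‖z₀‖ - ‖g‖ ^ 2 / δ with hB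
  have hlow : ∀ z : G, (B : EReal) ≤ h z := by
    intro z
    rcases eq_or_ne (h z) ⊤ with htop | htop
    · simp [htop]
    · set t : ℝ := (h z).toReal with ht
      have hz : h z = (t : EReal) := (EReal.coe_toReal htop (hbot z)).symm
      have h1 := hmid z₀ z
      rw [hhz₀, hz] at h1
      set m : G := (1/2 : ℝ) • z₀ + (1/2 : ℝ) • z with hm
      have h2 : ((g m + c + δ / 8 * ‖z₀ - z‖ ^ 2 : ℝ) : EReal) ≤ ((r₀/2 + t/2 : ℝ) : EReal) := by
        calc ((g m + c + δ / 8 * ‖z₀ - z‖ ^ 2 : ℝ) : EReal)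
            = ((g m + c : ℝ) : EReal) + ((δ / 8 * ‖z₀ - z‖ ^ 2 : ℝ) : EReal) := by
              rw [← EReal.coe_add]
          _ ≤ h m + ((δ / 8 * ‖z₀ - z‖ ^ 2 : ℝ) : EReal) := by gcongr; exact hgc m
          _ ≤ ((1/2 : ℝ) : EReal) * (r₀ : EReal) + ((1/2 : ℝ) : EReal) * (t : EReal) := h1
          _ = ((r₀/2 + t/2 : ℝ) : EReal) := by
              norm_cast
              ring
      rw [EReal.coe_le_coe_iff] at h2
      -- g m = (g z₀ + g z)/2
      have hgm : g m = (g z₀ + g z)/2 := by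
        simp [hm, map_add, map_smul]
        ring
      have hgz : -(‖g‖ * ‖z‖) ≤ g z := by
        have := (g.le_opNorm z)
        have h3 : |g z| ≤ ‖g‖ * ‖z‖ := by simpa [Real.norm_eq_abs] using this
        linarith [neg_abs_le (g z), abs_nonneg (g z)]
      have hzn : ‖z‖ ≤ ‖z₀ - z‖ + ‖z₀‖ := by
        calc ‖z‖ = ‖z₀ - (z₀ - z)‖ := by rw [sub_sub_cancel]
          _ ≤ ‖z₀‖ + ‖z₀ - z‖ := norm_sub_le _ _
          _ = ‖z₀ - z‖ + ‖z₀‖ := by ring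
      rw [hz, EReal.coe_le_coe_iff, hB]
      set d : ℝ := ‖z₀ - z‖ with hd
      have hgnn : (0:ℝ) ≤ ‖g‖ := norm_nonneg _
      have hq : δ / 4 * d ^ 2 - ‖g‖ * d + ‖g‖ ^ 2 / δ ≥ 0 := by
        have hδ' : δ ≠ 0 := ne_of_gt hδ
        have heq : δ / 4 * d ^ 2 - ‖g‖ * d + ‖g‖ ^ 2 / δ = (δ * d - 2 * ‖g‖) ^ 2 / (4 * δ) := by
          field_simp
          ring
        rw [heq]
        positivity
      nlinarith [mul_le_mul_of_nonneg_left hzn hgnn]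
  -- the infimum
  set S : Set ℝ := {t : ℝ | ∃ z, h z ≤ (t : EReal)} with hSdef
  have hSne : r₀ ∈ S := ⟨z₀, hhz₀.le⟩
  have hSbd : B ∈ lowerBounds S := by
    rintro t ⟨z, hz⟩
    have := (hlow z).trans hz
    exact_mod_cast this
  set m : ℝ := sInf S with hm
  have hm_le : ∀ z, (m : EReal) ≤ h z := by
    intro z
    rcases eq_or_ne (h z) ⊤ with e | e
    · simp [e]
    · have hzz : h z = ((h z).toReal : EReal) := (EReal.coe_toReal e (hbot z)).symm
      have hmem : (h z).toReal ∈ S := ⟨z, hzz.le⟩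
      have := csInf_le ⟨B, hSbd⟩ hmem
      rw [hzz]
      exact_mod_cast this
  have hex : ∀ ε : ℝ, 0 < ε → ∃ z, h z ≤ ((m + ε : ℝ) : EReal) := by
    intro ε hε
    obtain ⟨t, htS, htlt⟩ := exists_lt_of_csInf_lt ⟨r₀, hSne⟩ (lt_add_of_pos_right m hε)
    obtain ⟨z, hz⟩ := htS
    refine ⟨z, hz.trans ?_⟩
    exact_mod_cast htlt.le
  choose x hx using fun n : ℕ => hex ((1/2) ^ n) (by positivity)
  have key : ∀ n k : ℕ, ‖x n - x k‖ ^ 2 ≤ 4 / δ * ((1/2) ^ n + (1/2) ^ k) := by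
    intro n k
    have h1 := hmid (x n) (x k)
    have h2 := hm_le ((1/2 : ℝ) • x n + (1/2 : ℝ) • x k)
    have h3 : ((m + δ / 8 * ‖x n - x k‖ ^ 2 : ℝ) : EReal)
        ≤ (((m + (1/2)^n)/2 + (m + (1/2)^k)/2 : ℝ) : EReal) := by
      calc ((m + δ / 8 * ‖x n - x k‖ ^ 2 : ℝ) : EReal)
          = (m : EReal) + ((δ / 8 * ‖x n - x k‖ ^ 2 : ℝ) : EReal) := by norm_cast
        _ ≤ h ((1/2 : ℝ) • x n + (1/2 : ℝ) • x k) + ((δ / 8 * ‖x n - x k‖ ^ 2 : ℝ) : EReal) := by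
            gcongr
        _ ≤ ((1/2 : ℝ) : EReal) * h (x n) + ((1/2 : ℝ) : EReal) * h (x k) := h1
        _ ≤ ((1/2 : ℝ) : EReal) * ((m + (1/2)^n : ℝ) : EReal)
              + ((1/2 : ℝ) : EReal) * ((m + (1/2)^k : ℝ) : EReal) := by
            have half : ((0:ℝ) : EReal) ≤ ((1/2 : ℝ) : EReal) := by norm_num
            exact add_le_add (mul_le_mul_of_nonneg_left (hx n) (by exact_mod_cast half))
              (mul_le_mul_of_nonneg_left (hx k) (by exact_mod_cast half))
        _ = (((m + (1/2)^n)/2 + (m + (1/2)^k)/2 : ℝ) : EReal) := by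
            norm_cast
            ring
    rw [EReal.coe_le_coe_iff] at h3
    have h5 : 4 / δ * ((1/2 : ℝ) ^ n + (1/2) ^ k) = 4 * ((1/2) ^ n + (1/2) ^ k) / δ := by ring
    rw [h5, le_div_iff₀ hδ]
    nlinarith
  have hcauchy : CauchySeq x := by
    rw [Metric.cauchySeq_iff]
    intro ε hε
    obtain ⟨N, hN⟩ : ∃ N : ℕ, 8 / δ * (1/2 : ℝ) ^ N < ε ^ 2 := by
      have h2 : Filter.Tendsto (fun n : ℕ => 8 / δ * (1/2 : ℝ) ^ n) Filter.atTop (nhds 0) := by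
        simpa using
          (tendsto_pow_atTop_nhds_zero_of_lt_one (r := (1/2 : ℝ)) (by norm_num)
            (by norm_num)).const_mul (8 / δ)
      exact (h2.eventually (gt_mem_nhds (by positivity))).exists
    refine ⟨N, fun n hn k hk => ?_⟩
    have hkey := key n k
    have hpn : ((1:ℝ)/2) ^ n ≤ (1/2) ^ N := pow_le_pow_of_le_one (by norm_num) (by norm_num) hn
    have hpk : ((1:ℝ)/2) ^ k ≤ (1/2) ^ N := pow_le_pow_of_le_one (by norm_num) (by norm_num) hk
    have hsq : ‖x n - x k‖ ^ 2 < ε ^ 2 := by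
      have h4 : 4 / δ * ((1/2 : ℝ) ^ n + (1/2) ^ k) ≤ 8 / δ * (1/2) ^ N := by
        rw [div_mul_eq_mul_div, div_mul_eq_mul_div, div_le_div_iff₀ hδ hδ]
        nlinarith
      linarith
    rw [dist_eq_norm]
    exact lt_of_pow_lt_pow_left₀ 2 hε.le hsq
  obtain ⟨xb, hxb⟩ := cauchySeq_tendsto_of_complete hcauchy
  have hhxb : h xb ≤ (m : EReal) := by
    by_contra hlt
    push_neg at hlt
    obtain ⟨q, hq1, hq2⟩ := EReal.exists_between_coe_real hlt
    have hq : m < q := by exact_mod_cast hq1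
    have hev : ∀ᶠ z in nhds xb, (q : EReal) < h z := hlsc xb (q : EReal) hq2
    have hev2 : ∀ᶠ n in Filter.atTop, (q : EReal) < h (x n) := hxb.eventually hev
    have hev3 : ∀ᶠ n : ℕ in Filter.atTop, (1/2 : ℝ) ^ n < q - m := by
      have h2 : Filter.Tendsto (fun n : ℕ => (1/2 : ℝ) ^ n) Filter.atTop (nhds 0) :=
        tendsto_pow_atTop_nhds_zero_of_lt_one (by norm_num) (by norm_num)
      exact h2.eventually (gt_mem_nhds (by linarith))
    obtain ⟨n, hn1, hn2⟩ := (hev2.and hev3).exists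
    have := hn1.trans_le (hx n)
    rw [EReal.coe_lt_coe_iff] at this
    linarith
  exact ⟨xb, fun z => hhxb.trans (hm_le z)⟩

lemma ereal_coe_mul_add (a : ℝ) (ha : 0 ≤ a) (x y : EReal) :
    (a : EReal) * (x + y) = (a : EReal) * x + (a : EReal) * y := by
  rcases eq_or_lt_of_le ha with rfl | hpos
  · simp
  · have hpos' : (0 : EReal) < (a : EReal) := by exact_mod_cast hpos
    induction x with
    | bot => simp [EReal.mul_bot_of_pos hpos']
    | top =>
      induction y with
      | bot => simp [EReal.mul_bot_of_pos hpos', EReal.mul_top_of_pos hpos']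
      | top => simp [EReal.mul_top_of_pos hpos']
      | coe t =>
        rw [EReal.top_add_coe, EReal.mul_top_of_pos hpos', ← EReal.coe_mul, EReal.top_add_coe]
    | coe s =>
      induction y with
      | bot => simp [EReal.mul_bot_of_pos hpos', ← EReal.coe_mul]
      | top =>
        rw [EReal.coe_add_top, EReal.mul_top_of_pos hpos', ← EReal.coe_mul, EReal.coe_add_top]
      | coe t =>
        norm_cast
        ring

lemma ereal_cancel (r s : ℝ) (X : EReal) (h : ((r + s : ℝ) : EReal) ≤ (r : EReal) + X) :
    (s : EReal) ≤ X := by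
  induction X with
  | bot => simp only [EReal.add_bot, le_bot_iff, EReal.coe_ne_bot] at h
  | coe t =>
    rw [← EReal.coe_add, EReal.coe_le_coe_iff] at h
    rw [EReal.coe_le_coe_iff]
    linarith
  | top => exact le_top

theorem stmt8 {H G : Type*}
    [NormedAddCommGroup H] [InnerProductSpace ℝ H] [CompleteSpace H]
    [NormedAddCommGroup G] [InnerProductSpace ℝ G] [CompleteSpace G]
    (F : H → EReal)
    (hFproper : (∃ x, F x ≠ ⊤) ∧ ∀ x, F x ≠ ⊥)
    (hFlsc : LowerSemicontinuous F)
    (hFconvex : ∀ (x y : H) (a b : ℝ), 0 ≤ a → 0 ≤ b → a + b = 1 →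
      F (a • x + b • y) ≤ (a : EReal) * F x + (b : EReal) * F y)
    (Gf ℓ : G → EReal) (δ : ℝ) (hδ : 0 < δ)
    (hGproper : (∃ x, Gf x ≠ ⊤) ∧ ∀ x, Gf x ≠ ⊥)
    (hGlsc : LowerSemicontinuous Gf)
    (hGconvex : ∀ (x y : G) (a b : ℝ), 0 ≤ a → 0 ≤ b → a + b = 1 →
      Gf (a • x + b • y) ≤ (a : EReal) * Gf x + (b : EReal) * Gf y)
    (hℓproper : (∃ x, ℓ x ≠ ⊤) ∧ ∀ x, ℓ x ≠ ⊥)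
    (hℓlsc : LowerSemicontinuous ℓ)
    (hℓstrong : ∀ (x y : G) (a b : ℝ), 0 ≤ a → 0 ≤ b → a + b = 1 →
      ℓ (a • x + b • y) + ((δ / 2 * a * b * ‖x - y‖ ^ 2 : ℝ) : EReal)
        ≤ (a : EReal) * ℓ x + (b : EReal) * ℓ y) :
    ∀ y : G, subdiff (fun w => ⨅ z : G, Gf z + ℓ (w - z)) y =
      svInv (fun u => svInv (subdiff Gf) u + svInv (subdiff ℓ) u) y := by
  obtain ⟨⟨zG, hzG⟩, hGbot⟩ := hGproper
  obtain ⟨⟨wL, hwL⟩, hℓbot⟩ := hℓproper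
  set q : G → EReal := fun w => ⨅ z : G, Gf z + ℓ (w - z) with hqdef
  have hq_le : ∀ w z : G, q w ≤ Gf z + ℓ (w - z) := fun w z => iInf_le _ z
  intro y
  ext u
  simp only [subdiff, svInv, Set.mem_setOf_eq, Set.mem_add]
  constructor
  · -- forward direction: needs existence of minimizer
    intro hu
    -- q is not identically ⊤
    have hqne : q (zG + wL) ≠ ⊤ := by
      intro htop
      have h1 : q (zG + wL) ≤ Gf zG + ℓ (zG + wL - zG) := hq_le _ _
      rw [add_sub_cancel_left] at h1
      rw [htop, top_le_iff] at h1
      exact absurd h1 (EReal.add_lt_top hzG hwL).ne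
    have hqy_ne_top : q y ≠ ⊤ := by
      intro htop
      have h1 := hu (zG + wL)
      rw [htop] at h1
      rw [EReal.top_add_coe, top_le_iff] at h1
      exact hqne h1
    -- h z := Gf z + ℓ (y - z) attains its minimum
    set h : G → EReal := fun z => Gf z + ℓ (y - z) with hhdef
    have hqyh : q y = ⨅ z : G, h z := rfl
    have hprop1 : ∃ z, h z ≠ ⊤ := by
      by_contra hc
      push_neg at hc
      have : q y = ⊤ := by
        rw [hqyh, iInf_eq_top]
        exact hc
      exact hqy_ne_top this
    have hprop2 : ∀ z, h z ≠ ⊥ := fun z => by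
      simp only [hhdef, ne_eq, EReal.add_eq_bot_iff, hGbot z, hℓbot (y - z), or_self,
        not_false_eq_true]
    have hlsc_h : LowerSemicontinuous h := by
      have h1 : LowerSemicontinuous fun z : G => ℓ (y - z) :=
        hℓlsc.comp (continuous_const.sub continuous_id)
      exact hGlsc.add' h1 fun z =>
        EReal.continuousAt_add (Or.inr (hℓbot _)) (Or.inl (hGbot _))
    have hstrong_h : ∀ (p p' : G) (a b : ℝ), 0 ≤ a → 0 ≤ b → a + b = 1 →
        h (a • p + b • p') + ((δ / 2 * a * b * ‖p - p'‖ ^ 2 : ℝ) : EReal)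
          ≤ (a : EReal) * h p + (b : EReal) * h p' := by
      intro p p' a b ha hb hab
      have hb' : b = 1 - a := by linarith
      subst hb'
      have harg : y - (a • p + (1 - a) • p') = a • (y - p) + (1 - a) • (y - p') := by
        module
      have hnrm : ‖(y - p) - (y - p')‖ = ‖p - p'‖ := by
        rw [show (y - p) - (y - p') = -(p - p') by abel, norm_neg]
      have hG := hGconvex p p' a (1 - a) ha hb hab
      have hL := hℓstrong (y - p) (y - p') a (1 - a) ha hb hab
      rw [hnrm, ← harg] at hL
      calc h (a • p + (1 - a) • p') + ((δ / 2 * a * (1 - a) * ‖p - p'‖ ^ 2 : ℝ) : EReal)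
          = Gf (a • p + (1 - a) • p')
            + (ℓ (y - (a • p + (1 - a) • p'))
              + ((δ / 2 * a * (1 - a) * ‖p - p'‖ ^ 2 : ℝ) : EReal)) := by
            rw [hhdef, add_assoc]
        _ ≤ ((a : EReal) * Gf p + ((1 - a : ℝ) : EReal) * Gf p')
            + ((a : EReal) * ℓ (y - p) + ((1 - a : ℝ) : EReal) * ℓ (y - p')) := add_le_add hG hL
        _ = ((a : EReal) * Gf p + (a : EReal) * ℓ (y - p))
            + (((1 - a : ℝ) : EReal) * Gf p' + ((1 - a : ℝ) : EReal) * ℓ (y - p')) := by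
            abel
        _ = (a : EReal) * h p + ((1 - a : ℝ) : EReal) * h p' := by
            rw [hhdef]
            simp only []
            rw [ereal_coe_mul_add a ha, ereal_coe_mul_add (1 - a) hb]
    obtain ⟨zb, hzb⟩ := strongly_convex_argmin h δ hδ ⟨hprop1, hprop2⟩ hlsc_h hstrong_h
    have hqy : q y = h zb := le_antisymm (hq_le y zb) (le_iInf hzb)
    have hhzb_ne_top : h zb ≠ ⊤ := by rw [← hqy]; exact hqy_ne_top
    have hGzb_ne_top : Gf zb ≠ ⊤ := by
      intro htop
      rw [hhdef] at hhzb_ne_top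
      simp only [htop] at hhzb_ne_top
      exact hhzb_ne_top (EReal.top_add_of_ne_bot (hℓbot _))
    have hℓzb_ne_top : ℓ (y - zb) ≠ ⊤ := by
      intro htop
      rw [hhdef] at hhzb_ne_top
      simp only [htop] at hhzb_ne_top
      exact hhzb_ne_top (EReal.add_top_of_ne_bot (hGbot _))
    set g₀ : ℝ := (Gf zb).toReal with hg₀
    set l₀ : ℝ := (ℓ (y - zb)).toReal with hl₀
    have hGzb : Gf zb = (g₀ : EReal) := (EReal.coe_toReal hGzb_ne_top (hGbot zb)).symm
    have hℓzb : ℓ (y - zb) = (l₀ : EReal) := (EReal.coe_toReal hℓzb_ne_top (hℓbot _)).symm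
    have hqy' : q y = ((g₀ + l₀ : ℝ) : EReal) := by
      rw [hqy, hhdef]
      simp only []
      rw [hGzb, hℓzb, ← EReal.coe_add]
    refine ⟨zb, ?_, y - zb, ?_, by abel⟩
    · -- u ∈ subdiff Gf zb
      intro v
      have h7 := (hu (y + v - zb)).trans (hq_le (y + v - zb) v)
      rw [show y + v - zb - y = v - zb by abel, show y + v - zb - v = y - zb by abel,
        hqy', hℓzb] at h7
      rw [hGzb, ← EReal.coe_add]
      have h8 : ((l₀ + (g₀ + ⟪u, v - zb⟫) : ℝ) : EReal) ≤ (l₀ : EReal) + Gf v := by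
        calc ((l₀ + (g₀ + ⟪u, v - zb⟫) : ℝ) : EReal)
            = ((g₀ + l₀ : ℝ) : EReal) + ((⟪u, v - zb⟫ : ℝ) : EReal) := by
              norm_cast
              ring
          _ ≤ Gf v + (l₀ : EReal) := h7
          _ = (l₀ : EReal) + Gf v := add_comm _ _
      have := ereal_cancel l₀ (g₀ + ⟪u, v - zb⟫) (Gf v) h8
      exact this
    · -- u ∈ subdiff ℓ (y - zb)
      intro v
      have h7 := (hu (v + zb)).trans (hq_le (v + zb) zb)
      rw [show v + zb - zb = v by abel, hqy', hGzb] at h7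
      rw [hℓzb, show v - (y - zb) = v + zb - y by abel, ← EReal.coe_add]
      have h8 : ((g₀ + (l₀ + ⟪u, v + zb - y⟫) : ℝ) : EReal) ≤ (g₀ : EReal) + ℓ v := by
        calc ((g₀ + (l₀ + ⟪u, v + zb - y⟫) : ℝ) : EReal)
            = ((g₀ + l₀ : ℝ) : EReal) + ((⟪u, v + zb - y⟫ : ℝ) : EReal) := by
              norm_cast
              ring
          _ ≤ (g₀ : EReal) + ℓ v := h7
      exact ereal_cancel g₀ (l₀ + ⟪u, v + zb - y⟫) (ℓ v) h8
  · -- backward direction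
    rintro ⟨a, ha, b, hb, hab⟩
    have hGa_ne_top : Gf a ≠ ⊤ := by
      intro htop
      have h1 := ha zG
      rw [htop, EReal.top_add_coe, top_le_iff] at h1
      exact hzG h1
    have hℓb_ne_top : ℓ b ≠ ⊤ := by
      intro htop
      have h1 := hb wL
      rw [htop, EReal.top_add_coe, top_le_iff] at h1
      exact hwL h1
    set g₀ : ℝ := (Gf a).toReal with hg₀
    set l₀ : ℝ := (ℓ b).toReal with hl₀
    have hGa : Gf a = (g₀ : EReal) := (EReal.coe_toReal hGa_ne_top (hGbot a)).symm
    have hℓb : ℓ b = (l₀ : EReal) := (EReal.coe_toReal hℓb_ne_top (hℓbot b)).symm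
    intro w
    have hq1 : q y ≤ ((g₀ + l₀ : ℝ) : EReal) := by
      have := hq_le y a
      rw [show y - a = b by rw [← hab]; abel] at this
      rw [hGa, hℓb, ← EReal.coe_add] at this
      exact this
    refine le_iInf fun z => ?_
    have hA := ha z
    have hB := hb (w - z)
    rw [hGa] at hA
    rw [hℓb] at hB
    have hsum : ((g₀ + ⟪u, z - a⟫ : ℝ) : EReal) + ((l₀ + ⟪u, w - z - b⟫ : ℝ) : EReal)
        ≤ Gf z + ℓ (w - z) := by
      apply add_le_add
      · rw [EReal.coe_add] at *
        exact hA
      · rw [EReal.coe_add] at *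
        exact hB
    have hinner : ⟪u, z - a⟫ + ⟪u, w - z - b⟫ = ⟪u, w - y⟫ := by
      rw [← inner_add_right]
      congr 1
      rw [← hab]
      abel
    calc q y + ((⟪u, w - y⟫ : ℝ) : EReal)
        ≤ ((g₀ + l₀ : ℝ) : EReal) + ((⟪u, w - y⟫ : ℝ) : EReal) := by gcongr
      _ = ((g₀ + ⟪u, z - a⟫ : ℝ) : EReal) + ((l₀ + ⟪u, w - z - b⟫ : ℝ) : EReal) := by
          rw [← EReal.coe_add, ← EReal.coe_add, ← hinner]
          norm_cast
          ring
      _ ≤ Gf z + ℓ (w - z) := hsum
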